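/- Let n ≥ 1 and, in GL_{n+1}(ℚ), set aᵢ = I + E_{1,i+1} and bᵢ = I − 2E_{i+1,i+1} for i = 1,…,n, and let Gᵢ = ⟨aᵢ, bᵢ⟩ be the subgroup they generate. Then each Gᵢ is non-abelian, every element of Gᵢ commutes with every element of Gⱼ whenever i ≠ j, and the induced multiplication homomorphism G₁ × ⋯ × Gₙ → GL_{n+1}(ℚ), (g₁,…,gₙ) ↦ g₁⋯gₙ, is injective. In particular, the direct product of these n non-abelian groups admits a faithful (n+1)-dimensional representation over ℚ. -/

import Mathlib

open Matrix

namespace ProdGLAux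

variable {n : ℕ}

abbrev Mat (n : ℕ) := Matrix (Fin (n+1)) (Fin (n+1)) ℚ

def E (i : Fin n) : Mat n := single 0 i.succ 1
def F (i : Fin n) : Mat n := single i.succ i.succ 1
def T (i : Fin n) (t s : ℚ) : Mat n := t • E i + (s - 1) • F i
def M (i : Fin n) (t s : ℚ) : Mat n := 1 + T i t s

lemma EE (i j : Fin n) : E i * E j = 0 :=
  single_mul_single_of_ne _ _ _ _ (Fin.succ_ne_zero i) _
lemma FE (i j : Fin n) : F i * E j = 0 :=
  single_mul_single_of_ne _ _ _ _ (Fin.succ_ne_zero i) _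
lemma EF_same (i : Fin n) : E i * F i = E i := by
  rw [E, F, single_mul_single_same, one_mul]
lemma FF_same (i : Fin n) : F i * F i = F i := by
  rw [F, single_mul_single_same, one_mul]
lemma EF_ne {i j : Fin n} (h : i ≠ j) : E i * F j = 0 :=
  single_mul_single_of_ne _ _ _ _ (fun hc => h (Fin.succ_injective _ hc)) _
lemma FF_ne {i j : Fin n} (h : i ≠ j) : F i * F j = 0 :=
  single_mul_single_of_ne _ _ _ _ (fun hc => h (Fin.succ_injective _ hc)) _

lemma TT_same (i : Fin n) (t s t' s' : ℚ) :
    T i t s * T i t' s' = (t * (s' - 1)) • E i + ((s-1) * (s'-1)) • F i := by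
  simp [T, add_mul, mul_add, smul_mul_assoc, mul_smul_comm, smul_smul,
    EE, FE, EF_same, FF_same]
  module

lemma TT_ne {i j : Fin n} (h : i ≠ j) (t s t' s' : ℚ) :
    T i t s * T j t' s' = 0 := by
  simp [T, add_mul, mul_add, smul_mul_assoc, mul_smul_comm, smul_smul,
    EE, FE, EF_ne h, FF_ne h]

lemma Mmul_same (i : Fin n) (t s t' s' : ℚ) :
    M i t s * M i t' s' = M i (t' + t * s') (s * s') := by
  simp only [M, add_mul, mul_add, one_mul, mul_one, TT_same]
  unfold T
  module

lemma Mmul_ne {i j : Fin n} (h : i ≠ j) (t s t' s' : ℚ) :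
    M i t s * M j t' s' = 1 + T i t s + T j t' s' := by
  simp only [M, add_mul, mul_add, one_mul, mul_one, TT_ne h]
  abel

lemma M_zero_one (i : Fin n) : M i 0 1 = 1 := by simp [M, T]

lemma E_apply (i : Fin n) (p q : Fin (n+1)) :
    E i p q = if p = 0 ∧ q = i.succ then 1 else 0 := by
  simp [E, single]; aesop

lemma F_apply (i : Fin n) (p q : Fin (n+1)) :
    F i p q = if p = i.succ ∧ q = i.succ then 1 else 0 := by
  simp [F, single]; aesop

lemma E_top (i j : Fin n) : E i 0 j.succ = if i = j then 1 else 0 := by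
  rw [E_apply]
  simp [Fin.succ_inj, eq_comm]

lemma F_top (i j : Fin n) : F i 0 j.succ = 0 := by
  rw [F_apply]
  simp [(Fin.succ_ne_zero i).symm]

lemma E_diag (i j : Fin n) : E i j.succ j.succ = 0 := by
  rw [E_apply]
  simp [Fin.succ_ne_zero]

lemma F_diag (i j : Fin n) : F i j.succ j.succ = if i = j then 1 else 0 := by
  rw [F_apply]
  simp [Fin.succ_inj, eq_comm]

lemma T_apply_top (i j : Fin n) (t s : ℚ) :
    T i t s 0 j.succ = if i = j then t else 0 := by
  rw [T, Matrix.add_apply, Matrix.smul_apply, Matrix.smul_apply, E_top, F_top]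
  split <;> simp

lemma T_apply_diag (i j : Fin n) (t s : ℚ) :
    T i t s j.succ j.succ = if i = j then s - 1 else 0 := by
  rw [T, Matrix.add_apply, Matrix.smul_apply, Matrix.smul_apply, E_diag, F_diag]
  split <;> simp

lemma M_apply_top (i j : Fin n) (t s : ℚ) :
    M i t s 0 j.succ = if i = j then t else 0 := by
  rw [M, Matrix.add_apply, T_apply_top, Matrix.one_apply_ne (Fin.succ_ne_zero j).symm,
    zero_add]

lemma M_apply_diag (i j : Fin n) (t s : ℚ) :
    M i t s j.succ j.succ = if i = j then s else 1 := by
  rw [M, Matrix.add_apply, T_apply_diag, Matrix.one_apply_eq]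
  split <;> ring

lemma M_row_succ_of_s_zero (i : Fin n) (t : ℚ) (q : Fin (n+1)) :
    M i t 0 i.succ q = 0 := by
  rw [M, Matrix.add_apply, T]
  simp [Matrix.add_apply, Matrix.smul_apply, E_apply, F_apply, Matrix.one_apply,
    Fin.succ_ne_zero]
  aesop

section GLlevel
variable {n : ℕ}

/-- the generic element as a unit -/
def U (i : Fin n) (t s : ℚ) (hs : s ≠ 0) : GL (Fin (n+1)) ℚ where
  val := M i t s
  inv := M i (-t/s) s⁻¹
  val_inv := by
    rw [Mmul_same, ← M_zero_one i]
    congr 1 <;> field_simp <;> ring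
  inv_val := by
    rw [Mmul_same, ← M_zero_one i]
    congr 1 <;> field_simp <;> ring

lemma U_coe (i : Fin n) (t s : ℚ) (hs : s ≠ 0) : (U i t s hs : Mat n) = M i t s := rfl

/-- the subgroup of all `M i t s` -/
def H (i : Fin n) : Subgroup (GL (Fin (n+1)) ℚ) where
  carrier := {g | ∃ t s : ℚ, (g : Mat n) = M i t s}
  one_mem' := ⟨0, 1, by rw [Units.val_one, M_zero_one]⟩
  mul_mem' := by
    rintro g h ⟨t, s, hg⟩ ⟨t', s', hh⟩
    exact ⟨t' + t * s', s * s', by rw [Units.val_mul, hg, hh, Mmul_same]⟩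
  inv_mem' := by
    rintro g ⟨t, s, hg⟩
    have hs : s ≠ 0 := by
      intro hs0
      subst hs0
      have h1 : ((↑g * ↑g⁻¹ : Mat n)) i.succ i.succ = 1 := by
        rw [Units.mul_inv]; exact Matrix.one_apply_eq _
      rw [Matrix.mul_apply] at h1
      have : ∀ q, (g : Mat n) i.succ q = 0 := by
        intro q; rw [hg]; exact M_row_succ_of_s_zero i t q
      simp [this] at h1
    refine ⟨-t/s, s⁻¹, ?_⟩
    rw [Matrix.coe_units_inv]
    apply Matrix.inv_eq_right_inv
    rw [hg, Mmul_same, ← M_zero_one i]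
    congr 1 <;> field_simp <;> ring

lemma prod_take (t s : Fin n → ℚ) :
    ∀ k, k ≤ n → ((List.ofFn fun i => M i (t i) (s i)).take k).prod
      = 1 + ∑ i ∈ Finset.univ.filter (fun i : Fin n => (i : ℕ) < k), T i (t i) (s i) := by
  intro k
  induction k with
  | zero => intro _; simp
  | succ k ih =>
    intro hk
    have hkn : k < n := hk
    have hlen : k < (List.ofFn fun i => M i (t i) (s i)).length := by
      simpa using hkn
    rw [List.prod_take_succ _ k hlen, ih (le_of_lt hkn)]
    have hget : (List.ofFn fun i => M i (t i) (s i))[k] = M ⟨k, hkn⟩ (t ⟨k, hkn⟩) (s ⟨k, hkn⟩) := by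
      simp
    rw [hget]
    have hfilter : (Finset.univ.filter (fun i : Fin n => (i : ℕ) < k + 1))
        = insert ⟨k, hkn⟩ (Finset.univ.filter (fun i : Fin n => (i : ℕ) < k)) := by
      ext i
      simp [Nat.lt_succ_iff_lt_or_eq, Fin.ext_iff]
      omega
    rw [hfilter, Finset.sum_insert (by simp)]
    rw [M, mul_add, mul_one, add_mul, one_mul]
    have hcross : (∑ i ∈ Finset.univ.filter (fun i : Fin n => (i : ℕ) < k), T i (t i) (s i))
        * T ⟨k, hkn⟩ (t ⟨k, hkn⟩) (s ⟨k, hkn⟩) = 0 := by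
      rw [Finset.sum_mul]
      apply Finset.sum_eq_zero
      intro i hi
      simp only [Finset.mem_filter] at hi
      exact TT_ne (by simp [Fin.ext_iff]; omega) _ _ _ _
    rw [hcross]
    abel

lemma prod_full (t s : Fin n → ℚ) :
    (List.ofFn fun i => M i (t i) (s i)).prod = 1 + ∑ i : Fin n, T i (t i) (s i) := by
  have := prod_take t s n le_rfl
  rw [List.take_of_length_le (by simp)] at this
  rw [this]
  congr 1
  apply Finset.sum_congr _ (fun _ _ => rfl)
  ext i
  simp [i.isLt]

end GLlevel

end ProdGLAux


open ProdGLAux in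

/-- Sharpness over `ℚ`: in `GL_{n+1}(ℚ)` the matrices `aᵢ = I + E_{1,i+1}` and
`bᵢ = I - 2 E_{i+1,i+1}` generate subgroups `Gᵢ = ⟨aᵢ, bᵢ⟩` that are non-abelian,
commute elementwise with each other, and the multiplication map
`G₁ × ⋯ × Gₙ → GL_{n+1}(ℚ)` is injective; hence the product of these `n` non-abelian
groups has a faithful `(n+1)`-dimensional representation over `ℚ`.
(Indices are zero-based: row `0` plays the role of row `1` in the paper.) -/
theorem product_of_nonabelian_groups_in_GL (n : ℕ) (hn : 1 ≤ n) :
    ∃ a b : Fin n → GL (Fin (n + 1)) ℚ,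
      (∀ i, (a i : Matrix (Fin (n + 1)) (Fin (n + 1)) ℚ)
          = 1 + Matrix.single 0 i.succ 1) ∧
      (∀ i, (b i : Matrix (Fin (n + 1)) (Fin (n + 1)) ℚ)
          = 1 - (2 : ℚ) • Matrix.single i.succ i.succ 1) ∧
      (∀ i, ∃ x ∈ Subgroup.closure {a i, b i}, ∃ y ∈ Subgroup.closure {a i, b i},
        x * y ≠ y * x) ∧
      (∀ i j, i ≠ j → ∀ x ∈ Subgroup.closure {a i, b i},
        ∀ y ∈ Subgroup.closure {a j, b j}, Commute x y) ∧
      Function.Injective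
        (fun g : (i : Fin n) → (Subgroup.closure {a i, b i} : Subgroup (GL (Fin (n + 1)) ℚ)) =>
          (List.ofFn fun i => (g i : GL (Fin (n + 1)) ℚ)).prod) := by
  refine ⟨fun i => U i 1 1 one_ne_zero, fun i => U i 0 (-1) (by norm_num), ?_, ?_, ?_, ?_, ?_⟩
  · intro i
    rw [U_coe, M, T, E, F]
    module
  · intro i
    rw [U_coe, M, T, E, F]
    module
  · -- non-abelian
    intro i
    refine ⟨U i 1 1 one_ne_zero, Subgroup.subset_closure (Set.mem_insert _ _),
      U i 0 (-1) (by norm_num), Subgroup.subset_closure (Set.mem_insert_of_mem _ rfl), ?_⟩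
    intro hEq
    have := congrArg (fun u : GL (Fin (n+1)) ℚ => (u : Mat n) 0 i.succ) hEq
    simp only [Units.val_mul, U_coe, Mmul_same] at this
    rw [M_apply_top, M_apply_top] at this
    norm_num at this
  · -- commuting
    intro i j hij x hx y hy
    have hxH : x ∈ H i := by
      refine Subgroup.closure_le (H i) |>.2 ?_ hx
      rintro z hz
      rcases hz with rfl | rfl
      · exact ⟨1, 1, rfl⟩
      · exact ⟨0, -1, rfl⟩
    have hyH : y ∈ H j := by
      refine Subgroup.closure_le (H j) |>.2 ?_ hy
      rintro z hz
      rcases hz with rfl | rfl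
      · exact ⟨1, 1, rfl⟩
      · exact ⟨0, -1, rfl⟩
    obtain ⟨t, s, hxm⟩ := hxH
    obtain ⟨t', s', hym⟩ := hyH
    refine Units.ext ?_
    rw [Units.val_mul, Units.val_mul, hxm, hym, Mmul_ne hij, Mmul_ne hij.symm]
    abel
  · -- injective
    intro g h hprod
    have hle : ∀ i : Fin n,
        Subgroup.closure {U i 1 1 one_ne_zero, U i 0 (-1) (by norm_num)} ≤ H i := by
      intro i
      refine Subgroup.closure_le (H i) |>.2 ?_
      rintro z hz
      rcases hz with rfl | rfl
      · exact ⟨1, 1, rfl⟩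
      · exact ⟨0, -1, rfl⟩
    have hgH : ∀ i, ∃ t s : ℚ, ((g i : GL (Fin (n+1)) ℚ) : Mat n) = M i t s :=
      fun i => hle i (g i).2
    have hhH : ∀ i, ∃ t s : ℚ, ((h i : GL (Fin (n+1)) ℚ) : Mat n) = M i t s :=
      fun i => hle i (h i).2
    choose tg sg hgm using hgH
    choose th sh hhm using hhH
    have hmat := congrArg (fun u : GL (Fin (n+1)) ℚ => (u : Mat n)) hprod
    simp only at hmat
    have key : ∀ (f : (i : Fin n) → (Subgroup.closure
          {U i 1 1 one_ne_zero, U i 0 (-1) (by norm_num : (-1:ℚ) ≠ 0)} :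
          Subgroup (GL (Fin (n+1)) ℚ))) (tf sf : Fin n → ℚ),
        (∀ i, ((f i : GL (Fin (n+1)) ℚ) : Mat n) = M i (tf i) (sf i)) →
        (((List.ofFn fun i => ((f i : GL (Fin (n+1)) ℚ))).prod : GL (Fin (n+1)) ℚ) : Mat n)
          = (List.ofFn fun i => M i (tf i) (sf i)).prod := by
      intro f tf sf hf
      have h2 := MonoidHom.map_list_prod (Units.coeHom (Mat n))
        (List.ofFn fun i => ((f i : GL (Fin (n+1)) ℚ)))
      rw [List.map_ofFn] at h2
      rw [show (((List.ofFn fun i => ((f i : GL (Fin (n+1)) ℚ))).prod : GL (Fin (n+1)) ℚ) : Mat n)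
          = Units.coeHom (Mat n) (List.ofFn fun i => ((f i : GL (Fin (n+1)) ℚ))).prod from rfl,
        h2]
      exact congrArg List.prod (congrArg List.ofFn (funext fun i => hf i))
    rw [key g tg sg hgm, key h th sh hhm] at hmat
    rw [prod_full, prod_full] at hmat
    have hts : ∀ i : Fin n, tg i = th i ∧ sg i = sh i := by
      intro i
      constructor
      · have := congrArg (fun X : Mat n => X 0 i.succ) hmat
        simpa [Matrix.add_apply, Matrix.sum_apply, T_apply_top,
          Finset.sum_ite_eq, Finset.sum_ite_eq',
          Matrix.one_apply_ne (Fin.succ_ne_zero i).symm] using this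
      · have := congrArg (fun X : Mat n => X i.succ i.succ) hmat
        have h2 := this
        simp only [Matrix.add_apply, Matrix.sum_apply, T_apply_diag,
          Finset.sum_ite_eq, Finset.sum_ite_eq', Finset.mem_univ, if_true,
          Matrix.one_apply_eq] at h2
        linarith
    funext i
    refine Subtype.ext (Units.ext ?_)
    rw [hgm i, hhm i, (hts i).1, (hts i).2]
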